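/- Let M be a Ding projective right R-module with finite flat dimension. Then M is projective. Consequently, a Ding projective module is either projective or has flat dimension ∞. -/

import Mathlib

/-! Preamble: basic notions of relative homological algebra over a
(possibly noncommutative) ring.  Right `R`-modules are modeled as
(left) modules over the opposite ring `Rᵐᵒᵖ`. -/

open CategoryTheory Opposite

noncomputable section

/-- The Ext group `Ext^n(A, B)` in the category of left `S`-modules,
computed as a derived functor (of `ℤ`-modules). -/
def extGroup (S : Type) [Ring S] (n : ℕ) (A B : ModuleCat.{0} S) : Type :=
  ((_root_.Ext ℤ (ModuleCat.{0} S) n).obj (op A)).obj B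

/-- Vanishing of the Ext group `Ext^n(A, B)`. -/
def extVanish (S : Type) [Ring S] (n : ℕ) (A B : ModuleCat.{0} S) : Prop :=
  Subsingleton (extGroup S n A B)

/-- A module `E` is FP-injective if `Ext¹(F, E) = 0` for every finitely
presented module `F`. -/
def FPInjective (S : Type) [Ring S] (E : ModuleCat.{0} S) : Prop :=
  ∀ F : ModuleCat.{0} S, Module.FinitePresentation S F → extVanish S 1 F E

/-- `E` satisfies the Ext-criterion for FP-injective dimension `≤ n`:
`Ext^{n+1}(F, E) = 0` for every finitely presented `F`. -/
def fpInjDimLE (S : Type) [Ring S] (E : ModuleCat.{0} S) (n : ℕ) : Prop :=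
  ∀ F : ModuleCat.{0} S, Module.FinitePresentation S F → extVanish S (n + 1) F E

/-- `E` has FP-injective dimension exactly `n` : `n` is the least natural number
with `Ext^{n+1}(F, E) = 0` for all finitely presented `F`. -/
def fpInjDimEq (S : Type) [Ring S] (E : ModuleCat.{0} S) (n : ℕ) : Prop :=
  fpInjDimLE S E n ∧ ∀ m : ℕ, fpInjDimLE S E m → n ≤ m

/-- `E` has finite FP-injective dimension. -/
def fpInjDimFinite (S : Type) [Ring S] (E : ModuleCat.{0} S) : Prop :=
  ∃ n : ℕ, fpInjDimLE S E n

/-- A ring `S` is left coherent if every finitely generated left ideal is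
finitely presented (as a left `S`-module). -/
def LeftCoherent (S : Type) [Ring S] : Prop :=
  ∀ I : Submodule S S, I.FG → Module.FinitePresentation S I

/-- A ring `S` is right coherent if its opposite ring is left coherent. -/
def RightCoherent (S : Type) [Ring S] : Prop :=
  LeftCoherent Sᵐᵒᵖ

section BTensor

variable (R : Type) [Ring R]

/-- The subgroup of `A ⊗_ℤ B` by which one quotients to obtain the balanced
tensor product `A ⊗_R B` of a right `R`-module `A` and a left `R`-module `B`. -/
def btRel (A : Type) [AddCommGroup A] [Module Rᵐᵒᵖ A]
    (B : Type) [AddCommGroup B] [Module R B] :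
    Submodule ℤ (TensorProduct ℤ A B) :=
  Submodule.span ℤ
    {x | ∃ (a : A) (r : R) (b : B),
      x = (MulOpposite.op r • a) ⊗ₜ[ℤ] b - a ⊗ₜ[ℤ] (r • b)}

/-- The balanced tensor product `A ⊗_R B` of a right `R`-module `A` and a left
`R`-module `B`, defined as a quotient of `A ⊗_ℤ B`. -/
abbrev BTensor (A : Type) [AddCommGroup A] [Module Rᵐᵒᵖ A]
    (B : Type) [AddCommGroup B] [Module R B] : Type :=
  TensorProduct ℤ A B ⧸ btRel R A B

variable {A A' : Type} [AddCommGroup A] [Module Rᵐᵒᵖ A] [AddCommGroup A'] [Module Rᵐᵒᵖ A']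
variable {B B' : Type} [AddCommGroup B] [Module R B] [AddCommGroup B'] [Module R B']

/-- The map `A ⊗_R B → A ⊗_R B'` induced by a map `f : B → B'` of left
`R`-modules. -/
def BTensor.lmap (f : B →ₗ[R] B') (A : Type) [AddCommGroup A] [Module Rᵐᵒᵖ A] :
    BTensor R A B →ₗ[ℤ] BTensor R A B' :=
  Submodule.mapQ (btRel R A B) (btRel R A B')
    (TensorProduct.map LinearMap.id f.toAddMonoidHom.toIntLinearMap)
    (by
      rw [btRel, Submodule.span_le]
      rintro x ⟨a, r, b, rfl⟩
      simp only [SetLike.mem_coe, Submodule.mem_comap, map_sub, TensorProduct.map_tmul,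
        LinearMap.id_apply, AddMonoidHom.coe_toIntLinearMap, LinearMap.toAddMonoidHom_coe,
        map_smul]
      exact Submodule.subset_span ⟨a, r, f b, by
        erw [map_sub, TensorProduct.map_tmul, TensorProduct.map_tmul]
        exact congrArg (fun y : B' => (MulOpposite.op r • a) ⊗ₜ[ℤ] f b - a ⊗ₜ[ℤ] y)
          (f.map_smul r b)⟩)

/-- The map `A ⊗_R B → A' ⊗_R B` induced by a map `g : A → A'` of right
`R`-modules. -/
def BTensor.rmap (g : A →ₗ[Rᵐᵒᵖ] A') (B : Type) [AddCommGroup B] [Module R B] :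
    BTensor R A B →ₗ[ℤ] BTensor R A' B :=
  Submodule.mapQ (btRel R A B) (btRel R A' B)
    (TensorProduct.map g.toAddMonoidHom.toIntLinearMap LinearMap.id)
    (by
      rw [btRel, Submodule.span_le]
      rintro x ⟨a, r, b, rfl⟩
      simp only [SetLike.mem_coe, Submodule.mem_comap, map_sub, TensorProduct.map_tmul,
        LinearMap.id_apply, AddMonoidHom.coe_toIntLinearMap, LinearMap.toAddMonoidHom_coe,
        map_smul]
      exact Submodule.subset_span ⟨g a, r, b, by
        erw [map_sub, TensorProduct.map_tmul, TensorProduct.map_tmul]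
        exact congrArg (fun y : A' => y ⊗ₜ[ℤ] b - g a ⊗ₜ[ℤ] (r • b))
          (g.map_smul (MulOpposite.op r) a)⟩)

/-- A right `R`-module `A` is flat if the functor `A ⊗_R —` preserves
injectivity of maps of left `R`-modules. -/
def FlatRight (A : ModuleCat.{0} Rᵐᵒᵖ) : Prop :=
  ∀ (B B' : ModuleCat.{0} R) (f : B →ₗ[R] B'),
    Function.Injective f → Function.Injective (BTensor.lmap R f A)

/-- A left `R`-module `B` is flat if the functor `— ⊗_R B` preserves
injectivity of maps of right `R`-modules. -/
def FlatLeft (B : ModuleCat.{0} R) : Prop :=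
  ∀ (A A' : ModuleCat.{0} Rᵐᵒᵖ) (g : A →ₗ[Rᵐᵒᵖ] A'),
    Function.Injective g → Function.Injective (BTensor.rmap R g B)

end BTensor

/-- A module `N` is Ding injective if there is a doubly infinite exact sequence
of injective modules, with `N` as one of the kernels, which stays exact after
applying `Hom(E, —)` for every FP-injective module `E`. -/
def DingInjective (S : Type) [Ring S] (N : ModuleCat.{0} S) : Prop :=
  ∃ (I : ℤ → ModuleCat.{0} S) (d : ∀ n : ℤ, I n →ₗ[S] I (n + 1)),
    (∀ n, Module.Injective S (I n)) ∧
    (∀ n, Function.Exact (d n) (d (n + 1))) ∧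
    Nonempty (N ≃ₗ[S] LinearMap.ker (d 0)) ∧
    (∀ E : ModuleCat.{0} S, FPInjective S E → ∀ n : ℤ,
      Function.Exact (fun g : E →ₗ[S] I n => (d n).comp g)
        (fun g : E →ₗ[S] I (n + 1) => (d (n + 1)).comp g))

/-- A right `R`-module `M` is Ding projective if there is a doubly infinite
exact sequence of projective right modules, with `M` as one of the kernels,
which stays exact after applying `Hom(—, F)` for every flat right module `F`. -/
def DingProjective (R : Type) [Ring R] (M : ModuleCat.{0} Rᵐᵒᵖ) : Prop :=
  ∃ (P : ℤ → ModuleCat.{0} Rᵐᵒᵖ) (d : ∀ n : ℤ, P n →ₗ[Rᵐᵒᵖ] P (n + 1)),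
    (∀ n, Module.Projective Rᵐᵒᵖ (P n)) ∧
    (∀ n, Function.Exact (d n) (d (n + 1))) ∧
    Nonempty (M ≃ₗ[Rᵐᵒᵖ] LinearMap.ker (d 0)) ∧
    (∀ F : ModuleCat.{0} Rᵐᵒᵖ, FlatRight R F → ∀ n : ℤ,
      Function.Exact (fun g : P (n + 1 + 1) →ₗ[Rᵐᵒᵖ] F => g.comp (d (n + 1)))
        (fun g : P (n + 1) →ₗ[Rᵐᵒᵖ] F => g.comp (d n)))

/-- A right `R`-module `M` is Ding flat if there is a doubly infinite exact
sequence of flat right modules, with `M` as one of the kernels, which stays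
exact after applying `— ⊗_R E` for every FP-injective left module `E`. -/
def DingFlat (R : Type) [Ring R] (M : ModuleCat.{0} Rᵐᵒᵖ) : Prop :=
  ∃ (F : ℤ → ModuleCat.{0} Rᵐᵒᵖ) (d : ∀ n : ℤ, F n →ₗ[Rᵐᵒᵖ] F (n + 1)),
    (∀ n, FlatRight R (F n)) ∧
    (∀ n, Function.Exact (d n) (d (n + 1))) ∧
    Nonempty (M ≃ₗ[Rᵐᵒᵖ] LinearMap.ker (d 0)) ∧
    (∀ E : ModuleCat.{0} R, FPInjective R E → ∀ n : ℤ,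
      Function.Exact (BTensor.rmap R (d n) E) (BTensor.rmap R (d (n + 1)) E))

/-- A left `R`-module `M` is Gorenstein flat if there is a doubly infinite
exact sequence of flat left modules, with `M` as one of the kernels, which
stays exact after applying `E ⊗_R —` for every injective right module `E`. -/
def GorensteinFlat (R : Type) [Ring R] (M : ModuleCat.{0} R) : Prop :=
  ∃ (F : ℤ → ModuleCat.{0} R) (d : ∀ n : ℤ, F n →ₗ[R] F (n + 1)),
    (∀ n, FlatLeft R (F n)) ∧
    (∀ n, Function.Exact (d n) (d (n + 1))) ∧
    Nonempty (M ≃ₗ[R] LinearMap.ker (d 0)) ∧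
    (∀ E : ModuleCat.{0} Rᵐᵒᵖ, Module.Injective Rᵐᵒᵖ E → ∀ n : ℤ,
      Function.Exact (BTensor.lmap R (d n) E) (BTensor.lmap R (d (n + 1)) E))

/-- A right `R`-module `M` has flat dimension `≤ n` : there is an exact
resolution `0 → F_n → ⋯ → F_0 → M → 0` by flat right modules (encoded as an
`ℕ`-indexed resolution which vanishes beyond degree `n`). -/
def flatDimLE (R : Type) [Ring R] (M : ModuleCat.{0} Rᵐᵒᵖ) (n : ℕ) : Prop :=
  ∃ (F : ℕ → ModuleCat.{0} Rᵐᵒᵖ) (d : ∀ k : ℕ, F (k + 1) →ₗ[Rᵐᵒᵖ] F k)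
    (ε : F 0 →ₗ[Rᵐᵒᵖ] M),
    (∀ k, FlatRight R (F k)) ∧
    Function.Surjective ε ∧
    Function.Exact (d 0) ε ∧
    (∀ k, Function.Exact (d (k + 1)) (d k)) ∧
    (∀ k, n < k → Subsingleton (F k))

/-- A right `R`-module has finite flat dimension. -/
def flatDimFinite (R : Type) [Ring R] (M : ModuleCat.{0} Rᵐᵒᵖ) : Prop :=
  ∃ n : ℕ, flatDimLE R M n

/-- A ring `R` is an `n`-FC ring if it is left and right coherent and has left
and right self FP-injective dimension equal to `n`. -/
def IsFCRing (R : Type) [Ring R] (n : ℕ) : Prop :=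
  LeftCoherent R ∧ RightCoherent R ∧
    fpInjDimEq R (ModuleCat.of R R) n ∧
    fpInjDimEq Rᵐᵒᵖ (ModuleCat.of Rᵐᵒᵖ Rᵐᵒᵖ) n

/-- A ring is Ding-Chen if it is an `n`-FC ring for some `n`. -/
def IsDingChen (R : Type) [Ring R] : Prop :=
  ∃ n : ℕ, IsFCRing R n

end


section Aux

variable {R : Type} [Ring R]

/-- Key lemma: a complex of projectives which is Hom-exact against flat
modules is Hom-exact against every module of finite flat dimension. -/
lemma key_homexact (P : ℤ → ModuleCat.{0} Rᵐᵒᵖ)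
    (d : ∀ n : ℤ, P n →ₗ[Rᵐᵒᵖ] P (n + 1))
    (hproj : ∀ n, Module.Projective Rᵐᵒᵖ (P n))
    (hex : ∀ n, Function.Exact (d n) (d (n + 1)))
    (hflat : ∀ F : ModuleCat.{0} Rᵐᵒᵖ, FlatRight R F → ∀ n : ℤ,
      Function.Exact (fun g : P (n + 1 + 1) →ₗ[Rᵐᵒᵖ] F => g.comp (d (n + 1)))
        (fun g : P (n + 1) →ₗ[Rᵐᵒᵖ] F => g.comp (d n))) :
    ∀ (k : ℕ) (F : ModuleCat.{0} Rᵐᵒᵖ), flatDimLE R F k → ∀ (n : ℤ)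
      (g : P (n + 1) →ₗ[Rᵐᵒᵖ] F), g.comp (d n) = 0 →
      ∃ h : P (n + 1 + 1) →ₗ[Rᵐᵒᵖ] F, h.comp (d (n + 1)) = g := by
  intro k
  induction k with
  | zero =>
    rintro F ⟨G, δ, ε, hGf, hsurj, hε0, hεk, hsub⟩ n g hg
    -- `ε` is bijective since `G 1` is trivial
    have hinj : Function.Injective ε := by
      intro a b hab
      have hz : ε (a - b) = 0 := by rw [map_sub, hab, sub_self]
      obtain ⟨x, hx⟩ := (hε0 (a - b)).mp hz
      haveI : Subsingleton (G 1) := hsub 1 (by norm_num)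
      rw [Subsingleton.elim x 0, map_zero] at hx
      exact sub_eq_zero.mp hx.symm
    let e : G 0 ≃ₗ[Rᵐᵒᵖ] F := LinearEquiv.ofBijective ε ⟨hinj, hsurj⟩
    have hεe : ∀ x : G 0, e x = ε x := fun _ => rfl
    have hg' : (e.symm.toLinearMap.comp g).comp (d n) = 0 := by
      rw [LinearMap.comp_assoc, hg, LinearMap.comp_zero]
    obtain ⟨h0, hh0⟩ := (hflat (G 0) (hGf 0) n (e.symm.toLinearMap.comp g)).mp hg'
    have hh0' : h0.comp (d (n + 1)) = e.symm.toLinearMap.comp g := hh0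
    refine ⟨e.toLinearMap.comp h0, ?_⟩
    rw [LinearMap.comp_assoc, hh0']
    ext x
    simp
  | succ k ih =>
    rintro F ⟨G, δ, ε, hGf, hsurj, hε0, hεk, hsub⟩ n g hg
    obtain ⟨m, rfl⟩ : ∃ m, n = m + 1 := ⟨n - 1, by omega⟩
    -- the first syzygy `K = ker ε` has flat dimension ≤ k
    have hK : flatDimLE R (ModuleCat.of Rᵐᵒᵖ (LinearMap.ker ε)) k := by
      refine ⟨fun j => G (j + 1), fun j => δ (j + 1),
        (δ 0).codRestrict _ (fun x => LinearMap.mem_ker.mpr (hε0.apply_apply_eq_zero x)),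
        fun j => hGf (j + 1), ?_, ?_, fun j => hεk (j + 1), fun j hj => hsub (j + 1) (by omega)⟩
      · rintro ⟨y, hy⟩
        obtain ⟨x, hx⟩ := (hε0 y).mp (LinearMap.mem_ker.mp hy)
        exact ⟨x, Subtype.ext hx⟩
      · intro x
        rw [Subtype.ext_iff]
        exact hεk 0 x
    -- lift `g` through `ε` using projectivity
    haveI := hproj (m + 1 + 1)
    obtain ⟨g0, hg0⟩ := Module.projective_lifting_property ε g hsurj
    -- the composite `g0 ∘ d (m+1)` lands in `K`
    have hmemK : ∀ x : P (m + 1), g0 (d (m + 1) x) ∈ LinearMap.ker ε := by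
      intro x
      rw [LinearMap.mem_ker]
      have h1 := LinearMap.congr_fun hg0 (d (m + 1) x)
      have h2 := LinearMap.congr_fun hg x
      simp only [LinearMap.comp_apply] at h1 h2
      rw [h1, h2]
      rfl
    set u : P (m + 1) →ₗ[Rᵐᵒᵖ] LinearMap.ker ε :=
      (g0.comp (d (m + 1))).codRestrict _ hmemK with hu_def
    have hu : u.comp (d m) = 0 := by
      ext x
      have : d (m + 1) (d m x) = 0 := (hex m).apply_apply_eq_zero x
      simp [hu_def, this]
    obtain ⟨v, hv⟩ := ih (ModuleCat.of Rᵐᵒᵖ (LinearMap.ker ε)) hK m u hu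
    have hεsub : ε.comp (LinearMap.ker ε).subtype = 0 := by
      ext z
      exact z.2
    -- correct the lift
    set g1 : P (m + 1 + 1) →ₗ[Rᵐᵒᵖ] G 0 :=
      g0 - (LinearMap.ker ε).subtype.comp v with hg1_def
    have hg1 : g1.comp (d (m + 1)) = 0 := by
      rw [hg1_def, LinearMap.sub_comp, LinearMap.comp_assoc, hv,
        LinearMap.subtype_comp_codRestrict, sub_self]
    obtain ⟨h0, hh0⟩ := (hflat (G 0) (hGf 0) (m + 1) g1).mp hg1
    have hh0' : h0.comp (d (m + 1 + 1)) = g1 := hh0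
    refine ⟨ε.comp h0, ?_⟩
    rw [LinearMap.comp_assoc, hh0', hg1_def, LinearMap.comp_sub, hg0,
      ← LinearMap.comp_assoc, hεsub, LinearMap.zero_comp, sub_zero]

end Aux

/-- A Ding projective right `R`-module of finite flat dimension is
projective. -/
theorem statement6 (R : Type) [Ring R] (M : ModuleCat.{0} Rᵐᵒᵖ)
    (hM : DingProjective R M) (hfin : flatDimFinite R M) :
    Module.Projective Rᵐᵒᵖ M := by
  obtain ⟨P, d, hproj, hex, ⟨e⟩, hflat⟩ := hM
  obtain ⟨k, G, δ, ε, hGf, hsurj, hε0, hεk, hsub⟩ := hfin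
  -- transfer the flat resolution of `M` to `ker (d 0)` along `e`
  have e' : M ≃ₗ[Rᵐᵒᵖ] LinearMap.ker (d ((-2 : ℤ) + 1 + 1)) := e
  have hK : flatDimLE R (ModuleCat.of Rᵐᵒᵖ (LinearMap.ker (d ((-2 : ℤ) + 1 + 1)))) k := by
    refine ⟨G, δ, e'.toLinearMap.comp ε, hGf, ?_, ?_, hεk, hsub⟩
    · intro y
      obtain ⟨x, hx⟩ := hsurj (e'.symm y)
      refine ⟨x, ?_⟩
      show e' (ε x) = y
      rw [hx]
      exact e'.apply_symm_apply y
    · intro y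
      refine Iff.trans ?_ (hε0 y)
      constructor
      · intro hy
        have h1 : e' (ε y) = 0 := hy
        have h2 := congrArg e'.symm h1
        simpa using h2
      · intro hy
        show e' (ε y) = 0
        rw [hy, map_zero]
  -- the canonical surjection `P (-1) → ker (d 0)`
  set t : P ((-2 : ℤ) + 1) →ₗ[Rᵐᵒᵖ] LinearMap.ker (d ((-2 : ℤ) + 1 + 1)) :=
    (d ((-2 : ℤ) + 1)).codRestrict _
      (fun x => LinearMap.mem_ker.mpr ((hex ((-2 : ℤ) + 1)).apply_apply_eq_zero x)) with ht_def
  have ht : t.comp (d (-2 : ℤ)) = 0 := by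
    ext x
    have : d ((-1 : ℤ)) (d (-2 : ℤ) x) = 0 := (hex (-2 : ℤ)).apply_apply_eq_zero x
    exact this
  obtain ⟨h, hh⟩ := key_homexact P d hproj hex hflat k
    (ModuleCat.of Rᵐᵒᵖ (LinearMap.ker (d ((-2 : ℤ) + 1 + 1)))) hK (-2 : ℤ) t ht
  -- `h` splits the inclusion of `ker (d 0)` into `P 0`
  have hsplit : h.comp (LinearMap.ker (d ((-2 : ℤ) + 1 + 1))).subtype = LinearMap.id := by
    apply LinearMap.ext
    intro y
    obtain ⟨x, hx⟩ := (hex ((-2 : ℤ) + 1) (y : P ((-2 : ℤ) + 1 + 1))).mp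
      (LinearMap.mem_ker.mp y.2)
    have h1 := LinearMap.congr_fun hh x
    simp only [LinearMap.comp_apply] at h1
    simp only [LinearMap.comp_apply, LinearMap.id_apply, Submodule.coe_subtype]
    rw [← hx, h1]
    exact Subtype.ext hx
  haveI := hproj ((-2 : ℤ) + 1 + 1)
  have hKproj : Module.Projective Rᵐᵒᵖ (LinearMap.ker (d ((-2 : ℤ) + 1 + 1))) :=
    Module.Projective.of_split (LinearMap.ker (d ((-2 : ℤ) + 1 + 1))).subtype h hsplit
  exact Module.Projective.of_equiv (R := Rᵐᵒᵖ) e'.symm
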